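/- Let F be the (M+1)(d-1) × (M+1)(d-1) Hermitian block matrix with blocks F_{11} = Σ_{m=1}^M K_m σ_m² (where K_m = C_m^{-1}), F_{1,m+1} = F_{m+1,1} = -I for m=1,…,M, F_{m+1,m+1} = κ_m C_m, and zero elsewhere, where each C_m is positive definite, κ_m σ_m² > 1. Then the (m+1,m+1) block of F^{-1} equals (1/κ_m) C_m^{-1} + (1/κ_m) C_m^{-1} ( Σ_{i=1}^M ((σ_i² κ_i − 1)/κ_i) C_i^{-1} )^{-1} (1/κ_m) C_m^{-1}. -/

import Mathlib

open Matrix ComplexOrder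

lemma posDef_smul_real {n : Type*} [Fintype n] {A : Matrix n n ℂ} (hA : A.PosDef)
    {c : ℝ} (hc : 0 < c) : (((c : ℂ)) • A).PosDef := by
  refine posDef_iff_dotProduct_mulVec.mpr ⟨?_, fun x hx => ?_⟩
  · unfold Matrix.IsHermitian
    rw [conjTranspose_smul, hA.isHermitian]
    simp
  · rw [smul_mulVec, dotProduct_smul, smul_eq_mul]
    exact mul_pos (by exact_mod_cast hc) (hA.dotProduct_mulVec_pos hx)

lemma posDef_sum {n ι : Type*} [Fintype n] [Fintype ι] [Nonempty ι]
    (A : ι → Matrix n n ℂ) (hA : ∀ i, (A i).PosDef) : (∑ i, A i).PosDef := by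
  refine posDef_iff_dotProduct_mulVec.mpr ⟨?_, fun x hx => ?_⟩
  · unfold Matrix.IsHermitian
    rw [conjTranspose_sum]
    exact Finset.sum_congr rfl fun i _ => (hA i).isHermitian
  · have h1 : (∑ i, A i) *ᵥ x = ∑ i, A i *ᵥ x := by
      ext k
      simp [mulVec, dotProduct, Matrix.sum_apply, Finset.sum_mul]
      exact Finset.sum_comm
    have h2 : star x ⬝ᵥ ∑ i, A i *ᵥ x = ∑ i, star x ⬝ᵥ (A i *ᵥ x) := by
      simp [dotProduct, Finset.sum_apply, Finset.mul_sum]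
      exact Finset.sum_comm
    rw [h1, h2]
    exact Finset.sum_pos (fun i _ => (hA i).dotProduct_mulVec_pos hx) Finset.univ_nonempty

theorem stmt17 (M d : ℕ) (hM : 1 ≤ M) (hd : 2 ≤ d)
    (C : Fin M → Matrix (Fin (d - 1)) (Fin (d - 1)) ℂ) (hC : ∀ m, (C m).PosDef)
    (κ σ : Fin M → ℝ) (hκ : ∀ m, 0 < κ m) (hσ : ∀ m, 0 < σ m)
    (hκσ : ∀ m, 1 < κ m * σ m)
    (F : Matrix (Fin (d - 1) ⊕ Fin M × Fin (d - 1))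
        (Fin (d - 1) ⊕ Fin M × Fin (d - 1)) ℂ)
    (hF : F = fromBlocks
        (∑ m, ((σ m : ℝ) : ℂ) • (C m)⁻¹)
        (Matrix.of fun i p => -(if i = p.2 then (1 : ℂ) else 0))
        (Matrix.of fun p j => -(if p.2 = j then (1 : ℂ) else 0))
        (Matrix.of fun p q =>
          if p.1 = q.1 then ((κ p.1 : ℝ) : ℂ) * C p.1 p.2 q.2 else 0))
    (m : Fin M) :
    (Matrix.of fun i j => F⁻¹ (Sum.inr (m, i)) (Sum.inr (m, j)))
      = ((1 / κ m : ℝ) : ℂ) • (C m)⁻¹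
        + (((1 / κ m : ℝ) : ℂ) • (C m)⁻¹)
          * (∑ i, (((σ i * κ i - 1) / κ i : ℝ) : ℂ) • (C i)⁻¹)⁻¹
          * (((1 / κ m : ℝ) : ℂ) • (C m)⁻¹) := by
  haveI : Nonempty (Fin M) := ⟨⟨0, hM⟩⟩
  set A : Matrix (Fin (d-1)) (Fin (d-1)) ℂ := ∑ m, ((σ m : ℝ) : ℂ) • (C m)⁻¹ with hAdef
  set B : Matrix (Fin (d-1)) (Fin M × Fin (d-1)) ℂ :=
    Matrix.of fun i p => -(if i = p.2 then (1 : ℂ) else 0) with hBdef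
  set Y : Matrix (Fin M × Fin (d-1)) (Fin (d-1)) ℂ :=
    Matrix.of fun p j => -(if p.2 = j then (1 : ℂ) else 0) with hYdef
  set D : Matrix (Fin M × Fin (d-1)) (Fin M × Fin (d-1)) ℂ :=
    Matrix.of (fun p q => if p.1 = q.1 then ((κ p.1 : ℝ) : ℂ) * C p.1 p.2 q.2 else 0) with hDdef
  set E : Matrix (Fin M × Fin (d-1)) (Fin M × Fin (d-1)) ℂ :=
    Matrix.of (fun p q => if p.1 = q.1 then (((κ p.1)⁻¹ : ℝ) : ℂ) * (C p.1)⁻¹ p.2 q.2 else 0)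
    with hEdef
  have hCK : ∀ i, C i * (C i)⁻¹ = 1 := fun i =>
    mul_nonsing_inv _ (hC i).det_pos.ne'.isUnit
  have hKC : ∀ i, (C i)⁻¹ * C i = 1 := fun i =>
    nonsing_inv_mul _ (hC i).det_pos.ne'.isUnit
  have hκC : ∀ (i : Fin M), ((κ i : ℝ) : ℂ) ≠ 0 := fun i => by
    exact_mod_cast (hκ i).ne'
  have hκinv : ∀ (i : Fin M), ((κ i : ℝ) : ℂ) * (((κ i)⁻¹ : ℝ) : ℂ) = 1 := fun i => by
    rw [Complex.ofReal_inv]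
    exact mul_inv_cancel₀ (hκC i)
  have hDE : D * E = 1 := by
    ext ⟨p1, p2⟩ ⟨q1, q2⟩
    simp only [hDdef, hEdef, mul_apply, Fintype.sum_prod_type, of_apply, one_apply,
      Prod.mk.injEq]
    rw [Finset.sum_comm]
    by_cases h : p1 = q1
    · subst h
      simp only [ite_mul, zero_mul, Finset.sum_ite_eq, Finset.mem_univ, if_true, if_pos rfl,
        true_and]
      have := congrFun (congrFun (hCK p1) p2) q2
      simp only [mul_apply, one_apply] at this
      rw [← this]
      refine Finset.sum_congr rfl fun j _ => ?_
      rw [mul_mul_mul_comm, hκinv p1, one_mul]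
    · simp [h, Ne.symm h]
  have hED : E * D = 1 := by
    ext ⟨p1, p2⟩ ⟨q1, q2⟩
    simp only [hDdef, hEdef, mul_apply, Fintype.sum_prod_type, of_apply, one_apply,
      Prod.mk.injEq]
    rw [Finset.sum_comm]
    by_cases h : p1 = q1
    · subst h
      simp only [ite_mul, zero_mul, Finset.sum_ite_eq, Finset.mem_univ, if_true, if_pos rfl,
        true_and]
      have := congrFun (congrFun (hKC p1) p2) q2
      simp only [mul_apply, one_apply] at this
      rw [← this]
      refine Finset.sum_congr rfl fun j _ => ?_
      rw [mul_mul_mul_comm, mul_comm ((((κ p1)⁻¹ : ℝ) : ℂ)), hκinv p1, one_mul]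
    · simp [h, Ne.symm h]
  letI instD : Invertible D := ⟨E, hED, hDE⟩
  have hinvD : ⅟D = E := rfl
  have hBEY : B * E * Y = ∑ i, (((κ i)⁻¹ : ℝ) : ℂ) • (C i)⁻¹ := by
    ext i j
    simp [hBdef, hEdef, hYdef, mul_apply, Fintype.sum_prod_type, Matrix.sum_apply,
      Finset.sum_ite_eq, Finset.sum_ite_eq', ite_mul, mul_ite, Finset.mul_sum, Finset.sum_mul]
  set S : Matrix (Fin (d-1)) (Fin (d-1)) ℂ :=
    ∑ i, (((σ i * κ i - 1) / κ i : ℝ) : ℂ) • (C i)⁻¹ with hSdef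
  have hSchur : A - B * ⅟D * Y = S := by
    rw [hinvD, Matrix.mul_assoc, ← Matrix.mul_assoc, hBEY, hAdef, hSdef,
      ← Finset.sum_sub_distrib]
    refine Finset.sum_congr rfl fun i _ => ?_
    rw [← sub_smul]
    congr 1
    have : (σ i * κ i - 1) / κ i = σ i - (κ i)⁻¹ := by
      rw [sub_div, mul_div_cancel_right₀ _ (hκ i).ne', one_div]
    rw [this]
    push_cast
    ring
  have hSpos : S.PosDef := by
    refine posDef_sum _ fun i => posDef_smul_real (hC i).inv ?_
    have h1 := hκσ i
    have h2 := hκ i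
    have h3 : 0 < σ i * κ i - 1 := by nlinarith [mul_comm (σ i) (κ i)]
    exact div_pos h3 h2
  letI instS0 : Invertible S := S.invertibleOfIsUnitDet hSpos.det_pos.ne'.isUnit
  letI instS : Invertible (A - B * ⅟D * Y) := by rw [hSchur]; exact instS0
  letI instF : Invertible (fromBlocks A B Y D) := fromBlocks₂₂Invertible A B Y D
  have hinvS : ⅟(A - B * ⅟D * Y) = S⁻¹ := by
    rw [invOf_eq_nonsing_inv, hSchur]
  have hFinv : (fromBlocks A B Y D)⁻¹
      = fromBlocks (⅟(A - B * ⅟D * Y)) (-(⅟(A - B * ⅟D * Y) * B * ⅟D))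
          (-(⅟D * Y * ⅟(A - B * ⅟D * Y)))
          (⅟D + ⅟D * Y * ⅟(A - B * ⅟D * Y) * B * ⅟D) := by
    rw [← invOf_eq_nonsing_inv, invOf_fromBlocks₂₂_eq]
  rw [hF] at *
  -- the (2,2) block
  have hblock : ∀ i j, (fromBlocks A B Y D)⁻¹ (Sum.inr (m, i)) (Sum.inr (m, j))
      = (E + E * Y * S⁻¹ * B * E) (m, i) (m, j) := by
    intro i j
    rw [hFinv, hinvS, hinvD]
    rfl
  ext i j
  simp only [of_apply, hblock]
  -- compute the entries
  have hEY : E * Y = Matrix.of fun p j =>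
      -((((κ p.1)⁻¹ : ℝ) : ℂ) * (C p.1)⁻¹ p.2 j) := by
    ext ⟨p1, p2⟩ j
    simp [hEdef, hYdef, mul_apply, Fintype.sum_prod_type, Finset.sum_ite_eq,
      Finset.sum_ite_eq', ite_mul, mul_ite]
  have hBE : B * E = Matrix.of fun i q =>
      -((((κ q.1)⁻¹ : ℝ) : ℂ) * (C q.1)⁻¹ i q.2) := by
    ext i ⟨q1, q2⟩
    simp [hEdef, hBdef, mul_apply, Fintype.sum_prod_type, Finset.sum_ite_eq,
      Finset.sum_ite_eq', ite_mul, mul_ite]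
  have hc : ((1 / κ m : ℝ) : ℂ) = (((κ m)⁻¹ : ℝ) : ℂ) := by rw [one_div]
  have hmain : (E * Y * S⁻¹ * B * E) (m, i) (m, j)
      = (((((κ m)⁻¹ : ℝ) : ℂ) • (C m)⁻¹) * S⁻¹ * ((((κ m)⁻¹ : ℝ) : ℂ) • (C m)⁻¹)) i j := by
    rw [Matrix.mul_assoc (E * Y * S⁻¹), hEY, hBE]
    simp only [mul_apply, of_apply, Matrix.smul_apply, smul_eq_mul, Finset.sum_mul, Finset.mul_sum]
    refine Finset.sum_congr rfl fun k _ => Finset.sum_congr rfl fun l _ => ?_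
    ring
  simp only [Matrix.add_apply, hmain, hc, hEdef, of_apply, if_pos rfl, Matrix.smul_apply, smul_eq_mul,
    Matrix.add_apply]
  ring_nf
  rw [if_pos trivial]
  exact congrArg _ hmain
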